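/- arXiv:1007.4131 — 5 statements merged into one kernel-verified Lean document; each statement's English description precedes it below -/
import Mathlib

section
/- Let A be a maximal dissipative operator on a complex Hilbert space H. Then A is injective if and only if its range R(A) is dense in H. -/
open scoped InnerProductSpace

variable {H : Type*} [NormedAddCommGroup H] [InnerProductSpace ℂ H] [CompleteSpace H]

/-- A (possibly unbounded) densely defined operator is dissipative if `Re ⟪Ax, x⟫ ≤ 0`. -/
def Dissipative (A : H →ₗ.[ℂ] H) : Prop :=
  ∀ x : A.domain, (⟪A x, (x : H)⟫_ℂ).re ≤ 0

/-- Maximal dissipative: densely defined, dissipative, with no proper dissipative extension. -/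
def MaximalDissipative (A : H →ₗ.[ℂ] H) : Prop :=
  Dense (A.domain : Set H) ∧ Dissipative A ∧ ∀ B : H →ₗ.[ℂ] H, Dissipative B → A ≤ B → B = A

lemma quad_aux {α β : ℝ} (hβ : β ≤ 0) (h : ∀ t : ℝ, t * α + t ^ 2 * β ≤ 0) : α = 0 := by
  rcases eq_or_lt_of_le hβ with hb | hb
  · have h1 := h 1
    have h2 := h (-1)
    nlinarith
  · have hβne : β ≠ 0 := ne_of_lt hb
    have h1 := h (-α / (2 * β))
    have hcalc : (-α / (2 * β)) * α + (-α / (2 * β)) ^ 2 * β = α ^ 2 / (-(4 * β)) := by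
      field_simp
      ring
    rw [hcalc] at h1
    have hpos : (0 : ℝ) < -(4 * β) := by linarith
    have h2 : (0 : ℝ) ≤ α ^ 2 / (-(4 * β)) := div_nonneg (sq_nonneg α) hpos.le
    have h3 : α ^ 2 / (-(4 * β)) = 0 := le_antisymm h1 h2
    have h4 : α ^ 2 = 0 := by
      rcases div_eq_zero_iff.mp h3 with h | h
      · exact h
      · exact absurd h (ne_of_gt hpos)
    exact (pow_eq_zero_iff two_ne_zero).mp h4

lemma key_aux (A : H →ₗ.[ℂ] H) (hd : Dissipative A) (x y : A.domain)
    (hx : (⟪A x, (x : H)⟫_ℂ).re = 0) :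
    ⟪A x, (y : H)⟫_ℂ = -(starRingEnd ℂ) ⟪A y, (x : H)⟫_ℂ := by
  set a := ⟪A x, (y : H)⟫_ℂ with ha
  set b := ⟪A y, (x : H)⟫_ℂ with hb
  set β := (⟪A y, (y : H)⟫_ℂ).re with hβ
  have hβ0 : β ≤ 0 := hd y
  have expand : ∀ c : ℂ, (c * a + (starRingEnd ℂ) c * b).re + Complex.normSq c * β ≤ 0 := by
    intro c
    have := hd (x + c • y)
    have hz : ((x + c • y : A.domain) : H) = (x : H) + c • (y : H) := rfl
    rw [A.map_add, A.map_smul, hz] at this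
    rw [inner_add_left, inner_add_right, inner_add_right, inner_smul_left, inner_smul_right,
      inner_smul_left, inner_smul_right] at this
    simp only [Complex.add_re, Complex.mul_re, Complex.conj_re, Complex.conj_im,
      Complex.normSq_apply, Complex.mul_im] at this ⊢
    rw [← ha, ← hb, ← hβ] at this
    nlinarith [this, hx]
  have hre : a.re + b.re = 0 := by
    refine quad_aux hβ0 fun t => ?_
    have := expand (t : ℂ)
    simp only [Complex.add_re, Complex.mul_re, Complex.ofReal_re, Complex.ofReal_im,
      Complex.normSq_apply, Complex.conj_ofReal] at this
    nlinarith [this]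
  have him : b.im - a.im = 0 := by
    refine quad_aux hβ0 fun t => ?_
    have := expand (t * Complex.I)
    simp only [map_mul, Complex.conj_ofReal, Complex.conj_I, Complex.add_re, Complex.mul_re,
      Complex.mul_im, Complex.ofReal_re, Complex.ofReal_im, Complex.I_re, Complex.I_im,
      Complex.neg_re, Complex.neg_im, Complex.normSq_apply] at this
    nlinarith [this]
  have h1 : a.re = (-(starRingEnd ℂ) b).re := by
    simp only [Complex.neg_re, Complex.conj_re]
    linarith
  have h2 : a.im = (-(starRingEnd ℂ) b).im := by
    simp only [Complex.neg_im, Complex.conj_im, neg_neg]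
    linarith
  exact Complex.ext h1 h2

theorem maximal_dissipative_injective_iff_denseRange (A : H →ₗ.[ℂ] H)
    (hA : MaximalDissipative A) :
    (∀ x : A.domain, A x = 0 → (x : H) = 0) ↔
      Dense (Set.range fun x : A.domain => A x) := by
  obtain ⟨hdense, hdiss, hmax⟩ := hA
  constructor
  · -- injective → dense range
    intro hinj
    set S : Submodule ℂ H := LinearMap.range A.toFun with hS
    have hSr : (Set.range fun x : A.domain => A x) = (S : Set H) := by
      rw [hS, LinearMap.coe_range]
      rfl
    rw [hSr, Submodule.dense_iff_topologicalClosure_eq_top,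
      Submodule.topologicalClosure_eq_top_iff]
    -- show the orthogonal complement is trivial
    rw [Submodule.eq_bot_iff]
    intro x hx
    have hperp : ∀ y : A.domain, ⟪A y, x⟫_ℂ = 0 := by
      intro y
      exact (Submodule.mem_orthogonal S x).mp hx (A y) (LinearMap.mem_range_self A.toFun y)
    by_cases hxd : x ∈ A.domain
    · -- x in the domain: show A x = 0, then injectivity gives x = 0
      set x' : A.domain := ⟨x, hxd⟩ with hx'
      have hxx : (⟪A x', (x' : H)⟫_ℂ).re = 0 := by
        have : ⟪A x', (x' : H)⟫_ℂ = 0 := hperp x'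
        rw [this]; rfl
      have hAx0 : A x' = 0 := by
        refine hdense.eq_zero_of_inner_left ℂ fun v hv => ?_
        change ⟪A x', ((⟨v, hv⟩ : A.domain) : H)⟫_ℂ = 0
        rw [key_aux A hdiss x' ⟨v, hv⟩ hxx, hperp ⟨v, hv⟩]
        simp
      exact hinj x' hAx0
    · -- x not in the domain: extend A by sending x to 0, contradicting maximality
      exfalso
      have hBdiss : Dissipative (A.supSpanSingleton x 0 hxd) := by
        intro z
        have hz : (z : H) ∈ A.domain ⊔ (ℂ ∙ x) := z.2
        rcases Submodule.mem_sup.mp hz with ⟨u, hu, v, hv, huv⟩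
        rcases Submodule.mem_span_singleton.mp hv with ⟨c, rfl⟩
        have hzeq : z = ⟨u + c • x,
            Submodule.mem_sup.2 ⟨u, hu, _, Submodule.mem_span_singleton.2 ⟨c, rfl⟩, rfl⟩⟩ :=
          Subtype.ext huv.symm
        rw [hzeq, A.supSpanSingleton_apply_mk x 0 hxd u hu c]
        simp only [smul_zero, add_zero]
        rw [inner_add_right, inner_smul_right]
        have hux : ⟪A ⟨u, hu⟩, x⟫_ℂ = 0 := hperp ⟨u, hu⟩
        rw [hux, mul_zero, add_zero]
        exact hdiss ⟨u, hu⟩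
      have hAB : A ≤ A.supSpanSingleton x 0 hxd := A.left_le_sup _ _
      have hBA := hmax _ hBdiss hAB
      have hxB : x ∈ (A.supSpanSingleton x 0 hxd).domain := by
        rw [A.domain_supSpanSingleton]
        exact Submodule.mem_sup_right (Submodule.mem_span_singleton_self x)
      rw [hBA] at hxB
      exact hxd hxB
  · -- dense range → injective
    intro hden x hx
    have hperp : ∀ y : A.domain, ⟪A y, (x : H)⟫_ℂ = 0 := by
      intro y
      have hxx : (⟪A x, (x : H)⟫_ℂ).re = 0 := by rw [hx, inner_zero_left]; rfl
      have h := key_aux A hdiss x y hxx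
      rw [hx, inner_zero_left, eq_comm, neg_eq_zero] at h
      simpa using congrArg (starRingEnd ℂ) h
    have h0 : ∀ z ∈ Set.range fun y : A.domain => A y, ⟪z, (x : H)⟫_ℂ = 0 := by
      rintro z ⟨y, rfl⟩; exact hperp y
    have hcont : Continuous fun z : H => ⟪z, (x : H)⟫_ℂ := continuous_id.inner continuous_const
    have heq := Continuous.ext_on hden hcont continuous_const fun z hz => h0 z hz
    have hxx : ⟪(x : H), (x : H)⟫_ℂ = 0 := congrFun heq (x : H)
    exact inner_self_eq_zero.mp hxx
end

section
/- Let H be a Krein space with fundamental symmetry J, and let L be a maximal J-dissipative operator with ker L = {0}. Then the J-adjoint L^c (defined by [Lx, y] = [x, L^c y]) also has trivial kernel. -/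
open scoped InnerProductSpace

variable {H : Type*} [NormedAddCommGroup H] [InnerProductSpace ℂ H] [CompleteSpace H]

def JDissipative (J : H →L[ℂ] H) (A : H →ₗ.[ℂ] H) : Prop :=
  ∀ x : A.domain, (⟪J (A x), (x : H)⟫_ℂ).re ≤ 0

def MaximalJDissipative (J : H →L[ℂ] H) (A : H →ₗ.[ℂ] H) : Prop :=
  Dense (A.domain : Set H) ∧ JDissipative J A ∧
    ∀ B : H →ₗ.[ℂ] H, JDissipative J B → A ≤ B → B = A

/-- The conjugated operator `J ∘ T ∘ J`, with domain `{x | J x ∈ D(T)}`. -/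
noncomputable def Jconj (J : H →L[ℂ] H) (T : H →ₗ.[ℂ] H) : H →ₗ.[ℂ] H where
  domain := T.domain.comap (J : H →ₗ[ℂ] H)
  toFun :=
  { toFun := fun x => J (T ⟨J (x : H), x.2⟩)
    map_add' := by
      intro x y
      have h : (⟨J ((x : H) + (y : H)), (x + y).2⟩ : T.domain)
          = ⟨J (x : H), x.2⟩ + ⟨J (y : H), y.2⟩ := by
        apply Subtype.ext; simp
      show J (T ⟨J ((x : H) + (y : H)), (x + y).2⟩) = _
      rw [h, T.map_add, map_add]
    map_smul' := by
      intro c x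
      have h : (⟨J (c • (x : H)), (c • x).2⟩ : T.domain)
          = c • (⟨J (x : H), x.2⟩ : T.domain) := by
        apply Subtype.ext; simp
      show J (T ⟨J (c • (x : H)), (c • x).2⟩) = _
      rw [h, T.map_smul, map_smul]
      rfl }

theorem jadjoint_ker_trivial (J : H →L[ℂ] H)
    (hJsa : IsSelfAdjoint J) (hJ2 : ∀ x : H, J (J x) = x)
    (L : H →ₗ.[ℂ] H) (hL : MaximalJDissipative J L)
    (hker : ∀ x : L.domain, L x = 0 → (x : H) = 0) :
    ∀ y : (Jconj J L.adjoint).domain, (Jconj J L.adjoint) y = 0 → (y : H) = 0 := by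
  intro y hy0
  obtain ⟨hdense, hdiss, hmax⟩ := hL
  have hJymem : J (y : H) ∈ L.adjoint.domain := y.2
  have hLadj : L.adjoint ⟨J (y : H), hJymem⟩ = 0 := by
    have hrfl : (Jconj J L.adjoint) y = J (L.adjoint ⟨J (y : H), hJymem⟩) := rfl
    rw [hrfl] at hy0
    have h := congrArg J hy0
    rwa [hJ2, map_zero] at h
  have hJinner : ∀ a b : H, ⟪J a, b⟫_ℂ = ⟪a, J b⟫_ℂ := by
    intro a b
    conv_lhs => rw [← hJsa.adjoint_eq]
    exact ContinuousLinearMap.adjoint_inner_left J b a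
  -- key orthogonality: ⟪J (L x), y⟫ = 0 for all x in D(L)
  have key : ∀ x : L.domain, ⟪J (L x), (y : H)⟫_ℂ = 0 := by
    intro x
    have h1 : ⟪(L.adjoint ⟨J (y : H), hJymem⟩ : H), (x : H)⟫_ℂ = ⟪J (y : H), L x⟫_ℂ :=
      L.adjoint_isFormalAdjoint hdense ⟨J (y : H), hJymem⟩ x
    rw [hLadj, inner_zero_left] at h1
    rw [hJinner, ← inner_conj_symm, ← h1, map_zero]
  by_cases hymem : (y : H) ∈ L.domain
  · -- case y ∈ D(L): show L y = 0
    set y2 : L.domain := ⟨(y : H), hymem⟩ with hy2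
    have hzero : ∀ x : L.domain, ⟪J (L y2), (x : H)⟫_ℂ = 0 := by
      intro x
      set a := ⟪J (L y2), (x : H)⟫_ℂ with ha
      by_contra hane
      have hexp : ∀ c : ℂ, (⟪J (L x), (x : H)⟫_ℂ).re + ((starRingEnd ℂ) c * a).re ≤ 0 := by
        intro c
        have h := hdiss (x + c • y2)
        have hco : ((x + c • y2 : L.domain) : H) = (x : H) + c • (y : H) := rfl
        rw [L.map_add, L.map_smul] at h
        rw [hco, map_add, map_smul] at h
        rw [inner_add_left, inner_add_right, inner_add_right, inner_smul_left,
          inner_smul_left, inner_smul_right, inner_smul_right] at h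
        rw [key x, key y2] at h
        simpa using h
      have hnormsq : 0 < Complex.normSq a := by
        rcases Complex.normSq_pos.mpr hane with h; exact h
      set r := (⟪J (L x), (x : H)⟫_ℂ).re with hr
      have ht := hexp (((1 - r) / Complex.normSq a : ℝ) • a)
      have h2 : (starRingEnd ℂ) a * a = (Complex.normSq a : ℂ) := by
        rw [mul_comm, Complex.mul_conj]
      have hcalc : ((starRingEnd ℂ) (((1 - r) / Complex.normSq a : ℝ) • a) * a).re
          = ((1 - r) / Complex.normSq a) * Complex.normSq a := by
        simp only [starRingEnd_apply, star_smul, smul_mul_assoc, star_trivial]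
        rw [← starRingEnd_apply, h2]
        simp [Complex.real_smul]
      rw [hcalc, div_mul_cancel₀ _ (ne_of_gt hnormsq)] at ht
      linarith
    have hJLy : J (L y2) = 0 := hdense.eq_zero_of_inner_left (𝕜 := ℂ) (fun v hv => hzero ⟨v, hv⟩)
    have hLy : L y2 = 0 := by
      have := congrArg J hJLy
      rwa [hJ2, map_zero] at this
    exact hker y2 hLy
  · -- case y ∉ D(L): extend L, contradicting maximality
    exfalso
    set B := L.supSpanSingleton (y : H) 0 hymem with hB
    have hBdom : B.domain = L.domain ⊔ ℂ ∙ (y : H) := rfl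
    have happ : ∀ (x' : H) (hx' : x' ∈ L.domain) (c : ℂ) (hmem : x' + c • (y : H) ∈ B.domain),
        B ⟨x' + c • (y : H), hmem⟩ = L ⟨x', hx'⟩ := by
      intro x' hx' c hmem
      have := L.supSpanSingleton_apply_mk (y : H) 0 hymem x' hx' c
      rw [smul_zero, add_zero] at this
      convert this using 2
    have hBdiss : JDissipative J B := by
      intro u
      have humem : (u : H) ∈ L.domain ⊔ ℂ ∙ (y : H) := u.2
      obtain ⟨x', hx', z, hz, hu⟩ := Submodule.mem_sup.mp humem
      obtain ⟨c, rfl⟩ := Submodule.mem_span_singleton.mp hz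
      have hmem' : x' + c • (y : H) ∈ B.domain := by rw [hu]; exact u.2
      have hueq : u = ⟨x' + c • (y : H), hmem'⟩ := Subtype.ext hu.symm
      rw [hueq, happ x' hx' c]
      show (⟪J (L ⟨x', hx'⟩), x' + c • (y : H)⟫_ℂ).re ≤ 0
      rw [inner_add_right, inner_smul_right, key ⟨x', hx'⟩, mul_zero, add_zero]
      exact hdiss ⟨x', hx'⟩
    have hle : L ≤ B := by
      refine ⟨le_sup_left, fun a b hab => ?_⟩
      have hbmem : ((a : H) + (0 : ℂ) • (y : H)) ∈ B.domain := by
        rw [zero_smul, add_zero, hab]; exact b.2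
      have hbeq : b = ⟨(a : H) + (0 : ℂ) • (y : H), hbmem⟩ := by
        apply Subtype.ext; rw [← hab]; simp
      rw [hbeq, happ (a : H) a.2 0]
    have hBL : B = L := hmax B hBdiss hle
    have hy' : (y : H) ∈ B.domain :=
      Submodule.mem_sup_right (Submodule.mem_span_singleton_self _)
    rw [hBL] at hy'
    exact hymem hy'
end

section
/- Let H be a Krein space and L a maximal J-dissipative operator. Suppose M⁺ and M⁻ are closed subspaces invariant under L with H = M⁺ ⊕ M⁻ (direct sum) such that (M⁺ ∩ D(L)) + (M⁻ ∩ D(L)) is dense in D(L) with respect to the graph norm. If iω ∈ ρ(L) for some real ω, then iω ∈ ρ(L|_{M⁺}) and iω ∈ ρ(L|_{M⁻}). -/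
open scoped InnerProductSpace

variable {H : Type*} [NormedAddCommGroup H] [InnerProductSpace ℂ H] [CompleteSpace H]

/-- `R` is the (bounded) resolvent of `A` at `z`, i.e. `R = (A - z)⁻¹`. -/
def ResolventAt (A : H →ₗ.[ℂ] H) (z : ℂ) (R : H →L[ℂ] H) : Prop :=
  (∀ y : H, ∃ hx : R y ∈ A.domain, A ⟨R y, hx⟩ - z • R y = y) ∧
    ∀ x : A.domain, R (A x - z • (x : H)) = (x : H)

/-- `z` belongs to the resolvent set of `A`. -/
def InResolvent (A : H →ₗ.[ℂ] H) (z : ℂ) : Prop :=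
  ∃ R : H →L[ℂ] H, ResolventAt A z R

/-- The closed subspace `M` is invariant under `L`: `D(L) ∩ M` is dense in `M` and
`L` maps `D(L) ∩ M` into `M`. -/
def InvariantUnder (L : H →ₗ.[ℂ] H) (M : Submodule ℂ H) : Prop :=
  Dense {x : M | (x : H) ∈ L.domain} ∧
    ∀ x : L.domain, (x : H) ∈ M → L x ∈ M

/-- `z` is in the resolvent set of the restriction `L|_M` viewed as an operator in `M`. -/
def InResolventRestrict (L : H →ₗ.[ℂ] H) (M : Submodule ℂ H) (z : ℂ) : Prop :=
  ∃ R : M →L[ℂ] M,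
    (∀ y : M, ∃ hx : (R y : H) ∈ L.domain,
        L ⟨(R y : H), hx⟩ - z • (R y : H) = (y : H)) ∧
    ∀ x : L.domain, ∀ hxM : (x : H) ∈ M, ∀ hm : L x - z • (x : H) ∈ M,
      R ⟨L x - z • (x : H), hm⟩ = ⟨(x : H), hxM⟩

set_option maxHeartbeats 800000 in
theorem key_aux_s13 (L : H →ₗ.[ℂ] H)
    (Mp Mm : Submodule ℂ H) (hMpc : IsClosed (Mp : Set H)) (hMmc : IsClosed (Mm : Set H))
    (hinvp : InvariantUnder L Mp) (hinvm : InvariantUnder L Mm)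
    (hcompl : IsCompl Mp Mm)
    (hgraphdense : ∀ x : L.domain, ∀ ε : ℝ, 0 < ε →
      ∃ u v : L.domain, (u : H) ∈ Mp ∧ (v : H) ∈ Mm ∧
        ‖(x : H) - ((u : H) + (v : H))‖ + ‖L x - (L u + L v)‖ < ε)
    (z : ℂ) (R : H →L[ℂ] H) (hR : ResolventAt L z R) :
    InResolventRestrict L Mp z := by
  classical
  set Q : H →L[ℂ] Mm := Mm.linearProjOfClosedCompl Mp hcompl.symm hMmc hMpc with hQ
  -- key claim: R maps Mp into Mp
  have hmem : ∀ y ∈ Mp, R y ∈ Mp := by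
    intro y hy
    have hclosed : closure (Mp : Set H) = Mp := hMpc.closure_eq
    suffices h : R y ∈ closure (Mp : Set H) by rw [hclosed] at h; exact h
    rw [Metric.mem_closure_iff]
    intro ε hε
    set C : ℝ := ‖R‖ * ((1 + ‖z‖) * (1 + ‖Q‖)) + 1 with hC
    have hC1 : 1 ≤ C := by
      have h1 : 0 ≤ ‖R‖ * ((1 + ‖z‖) * (1 + ‖Q‖)) := by positivity
      linarith
    have hCpos : 0 < C := by linarith
    obtain ⟨hx, hxe⟩ := hR.1 y
    set x : L.domain := ⟨R y, hx⟩ with hxdef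
    obtain ⟨u, v, hu, hv, hsmall⟩ := hgraphdense x (ε / C) (by positivity)
    set yp : H := L u - z • (u : H) with hyp_def
    set ym : H := L v - z • (v : H) with hym_def
    have hypM : yp ∈ Mp := Mp.sub_mem (hinvp.2 u hu) (Mp.smul_mem z hu)
    have hymM : ym ∈ Mm := Mm.sub_mem (hinvm.2 v hv) (Mm.smul_mem z hv)
    -- error estimate
    have herr : ‖y - (yp + ym)‖ ≤ (1 + ‖z‖) * (ε / C) := by
      have hye : y = L x - z • (x : H) := hxe.symm
      have : y - (yp + ym) = (L x - (L u + L v)) - z • ((x : H) - ((u : H) + (v : H))) := by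
        rw [hye]; simp [yp, ym, smul_sub, smul_add]; abel
      rw [this]
      calc ‖(L x - (L u + L v)) - z • ((x : H) - ((u : H) + (v : H)))‖
          ≤ ‖L x - (L u + L v)‖ + ‖z • ((x : H) - ((u : H) + (v : H)))‖ := norm_sub_le _ _
        _ = ‖L x - (L u + L v)‖ + ‖z‖ * ‖(x : H) - ((u : H) + (v : H))‖ := by rw [norm_smul]
        _ ≤ (1 + ‖z‖) * (‖(x : H) - ((u : H) + (v : H))‖ + ‖L x - (L u + L v)‖) := by
            nlinarith [norm_nonneg (L x - (L u + L v)),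
              norm_nonneg ((x : H) - ((u : H) + (v : H))), norm_nonneg z]
        _ ≤ (1 + ‖z‖) * (ε / C) := by
            have hz : (0:ℝ) ≤ 1 + ‖z‖ := by positivity
            exact mul_le_mul_of_nonneg_left hsmall.le hz
    have hQy : Q y = 0 := Submodule.linearProjOfIsCompl_apply_right' hcompl.symm hy
    have hQyp : Q yp = 0 := Submodule.linearProjOfIsCompl_apply_right' hcompl.symm hypM
    have hQym : (Q ym : H) = ym := by
      rw [show Q ym = ⟨ym, hymM⟩ from Submodule.linearProjOfIsCompl_apply_left hcompl.symm ⟨ym, hymM⟩]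
    have hym_small : ‖ym‖ ≤ ‖Q‖ * ((1 + ‖z‖) * (ε / C)) := by
      have : ym = (Q ((yp + ym) - y) : H) := by
        rw [map_sub, map_add, hQy, hQyp]
        simpa using hQym.symm
      rw [this]
      calc ‖(Q ((yp + ym) - y) : H)‖ = ‖Q ((yp + ym) - y)‖ := Submodule.norm_coe _
        _ ≤ ‖Q‖ * ‖(yp + ym) - y‖ := Q.le_opNorm _
        _ ≤ ‖Q‖ * ((1 + ‖z‖) * (ε / C)) := by
            have := herr
            rw [← norm_neg (yp + ym - y)] at *
            simp only [neg_sub] at *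
            exact mul_le_mul_of_nonneg_left this (norm_nonneg Q)
    refine ⟨u, hu, ?_⟩
    have hRyp : R yp = (u : H) := hR.2 u
    have hkey : R y - (u : H) = R (y - yp) := by rw [map_sub, hRyp]
    have hbound : ‖R y - (u : H)‖ ≤ ‖R‖ * ((1 + ‖z‖) * (1 + ‖Q‖)) * (ε / C) := by
      rw [hkey]
      calc ‖R (y - yp)‖ ≤ ‖R‖ * ‖y - yp‖ := R.le_opNorm _
        _ ≤ ‖R‖ * (‖y - (yp + ym)‖ + ‖ym‖) := by
            have : y - yp = (y - (yp + ym)) + ym := by abel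
            rw [this]
            exact mul_le_mul_of_nonneg_left (norm_add_le _ _) (norm_nonneg R)
        _ ≤ ‖R‖ * ((1 + ‖z‖) * (ε / C) + ‖Q‖ * ((1 + ‖z‖) * (ε / C))) := by
            exact mul_le_mul_of_nonneg_left (add_le_add herr hym_small) (norm_nonneg R)
        _ = ‖R‖ * ((1 + ‖z‖) * (1 + ‖Q‖)) * (ε / C) := by ring
    rw [dist_eq_norm]
    calc ‖R y - (u:H)‖ ≤ ‖R‖ * ((1 + ‖z‖) * (1 + ‖Q‖)) * (ε / C) := hbound
      _ = (C - 1) * (ε / C) := by rw [hC]; ring_nf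
      _ < C * (ε / C) := by
          have : 0 < ε / C := by positivity
          nlinarith
      _ = ε := by field_simp
  -- construct the restricted resolvent
  refine ⟨(R.comp Mp.subtypeL).codRestrict Mp (fun y => hmem y y.2), ?_, ?_⟩
  · intro y
    obtain ⟨hx, hxe⟩ := hR.1 (y : H)
    exact ⟨hx, hxe⟩
  · intro x hxM hm
    apply Subtype.ext
    exact hR.2 x

theorem resolvent_of_restriction (J : H →L[ℂ] H)
    (hJsa : IsSelfAdjoint J) (hJ2 : ∀ x : H, J (J x) = x)
    (L : H →ₗ.[ℂ] H) (hL : MaximalJDissipative J L)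
    (Mp Mm : Submodule ℂ H) (hMpc : IsClosed (Mp : Set H)) (hMmc : IsClosed (Mm : Set H))
    (hinvp : InvariantUnder L Mp) (hinvm : InvariantUnder L Mm)
    (hinf : Mp ⊓ Mm = ⊥) (hsup : Mp ⊔ Mm = ⊤)
    (hgraphdense : ∀ x : L.domain, ∀ ε : ℝ, 0 < ε →
      ∃ u v : L.domain, (u : H) ∈ Mp ∧ (v : H) ∈ Mm ∧
        ‖(x : H) - ((u : H) + (v : H))‖ + ‖L x - (L u + L v)‖ < ε) :
    ∀ ω : ℝ, InResolvent L (Complex.I * ω) →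
      InResolventRestrict L Mp (Complex.I * ω) ∧
        InResolventRestrict L Mm (Complex.I * ω) := by
  intro ω hres
  obtain ⟨R, hR⟩ := hres
  have hcompl : IsCompl Mp Mm := ⟨disjoint_iff.mpr hinf, codisjoint_iff.mpr hsup⟩
  have hgd' : ∀ x : L.domain, ∀ ε : ℝ, 0 < ε →
      ∃ u v : L.domain, (u : H) ∈ Mm ∧ (v : H) ∈ Mp ∧
        ‖(x : H) - ((u : H) + (v : H))‖ + ‖L x - (L u + L v)‖ < ε := by
    intro x ε hε
    obtain ⟨u, v, hu, hv, h⟩ := hgraphdense x ε hε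
    refine ⟨v, u, hv, hu, ?_⟩
    rw [add_comm ((v : H)) ((u : H)), add_comm (L v) (L u)]
    exact h
  exact ⟨key_aux_s13 L Mp Mm hMpc hMmc hinvp hinvm hcompl hgraphdense _ R hR,
    key_aux_s13 L Mm Mp hMmc hMpc hinvm hinvp hcompl.symm hgd' _ R hR⟩
end

section
/- Let H be a Krein space with fundamental symmetry J, and let M be a maximal uniformly positive closed subspace (there is δ > 0 with [x,x] ≥ δ‖x‖² for x ∈ M, and M is maximal with this property). Then H decomposes as the direct sum H = M ⊕ N where N = M^{[⊥]} (the J-orthogonal complement), N is uniformly negative, and the projection P onto M along N is J-self-adjoint ([Px, y] = [x, Py] for all x, y). -/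
open scoped InnerProductSpace

variable {H : Type*} [NormedAddCommGroup H] [InnerProductSpace ℂ H] [CompleteSpace H]

def Jorth (J : H →L[ℂ] H) (M : Submodule ℂ H) : Submodule ℂ H where
  carrier := {y | ∀ x ∈ M, ⟪J x, y⟫_ℂ = 0}
  add_mem' := by
    intro a b ha hb x hx
    rw [Set.mem_setOf_eq] at *
    rw [inner_add_right, ha x hx, hb x hx, add_zero]
  zero_mem' := by
    intro x hx
    exact inner_zero_right _
  smul_mem' := by
    intro c a ha x hx
    rw [Set.mem_setOf_eq] at *
    rw [inner_smul_right, ha x hx, mul_zero]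

section KreinAux

variable {J : H →L[ℂ] H}

lemma mem_Jorth {J : H →L[ℂ] H} {M : Submodule ℂ H} {y : H} :
    y ∈ Jorth J M ↔ ∀ x ∈ M, ⟪J x, y⟫_ℂ = 0 := Iff.rfl

lemma inner_J_comm (hJsa : IsSelfAdjoint J) (x y : H) : ⟪J x, y⟫_ℂ = ⟪x, J y⟫_ℂ := by
  conv_lhs => rw [← hJsa.adjoint_eq]
  exact ContinuousLinearMap.adjoint_inner_left J y x

lemma re_le_nn {x y : H} : (⟪x, y⟫_ℂ).re ≤ ‖x‖ * ‖y‖ :=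
  le_trans (Complex.re_le_norm _) (by exact norm_inner_le_norm _ _)

lemma inner_J_conj (hJsa : IsSelfAdjoint J) (x y : H) :
    ⟪J x, y⟫_ℂ = starRingEnd ℂ ⟪J y, x⟫_ℂ := by
  rw [inner_J_comm hJsa, ← inner_conj_symm]

/-- The projection onto the positive part: `(I + J)/2`. -/
noncomputable def Ppos (J : H →L[ℂ] H) : H →L[ℂ] H :=
  (2:ℂ)⁻¹ • (ContinuousLinearMap.id ℂ H + J)

lemma Ppos_apply (x : H) : Ppos J x = (2:ℂ)⁻¹ • (x + J x) := rfl

variable (hJsa : IsSelfAdjoint J) (hJ2 : ∀ x : H, J (J x) = x)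
include hJsa hJ2

lemma inner_split (x y : H) :
    ⟪J x, y⟫_ℂ = ⟪Ppos J x, Ppos J y⟫_ℂ - ⟪x - Ppos J x, y - Ppos J y⟫_ℂ := by
  simp only [Ppos_apply, map_smul, map_add, map_sub, inner_smul_left, inner_smul_right,
    inner_sub_left, inner_sub_right, inner_add_left, inner_add_right, inner_J_comm hJsa,
    hJ2, map_inv₀, Complex.conj_ofNat]
  ring

lemma inner_cross (x y : H) : ⟪Ppos J x, y - Ppos J y⟫_ℂ = 0 := by
  simp only [Ppos_apply, map_smul, map_add, map_sub, inner_smul_left, inner_smul_right,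
    inner_sub_left, inner_sub_right, inner_add_left, inner_add_right, inner_J_comm hJsa,
    hJ2, map_inv₀, Complex.conj_ofNat]
  ring

lemma J_Ppos (x : H) : J (Ppos J x) = Ppos J x := by
  simp only [Ppos_apply, map_smul, map_add, hJ2]
  rw [add_comm]

lemma Ppos_idem (x : H) : Ppos J (Ppos J x) = Ppos J x := by
  rw [Ppos_apply (Ppos J x), J_Ppos hJsa hJ2, ← two_smul ℂ, smul_smul]
  norm_num

lemma norm_sq_split (x : H) : ‖x‖ ^ 2 = ‖Ppos J x‖ ^ 2 + ‖x - Ppos J x‖ ^ 2 := by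
  have h := norm_add_sq (𝕜 := ℂ) (Ppos J x) (x - Ppos J x)
  rw [add_sub_cancel, inner_cross hJsa hJ2] at h
  simpa using h

lemma re_inner_J_self (x : H) :
    (⟪J x, x⟫_ℂ).re = ‖Ppos J x‖ ^ 2 - ‖x - Ppos J x‖ ^ 2 := by
  have h : ∀ z : H, (⟪z, z⟫_ℂ).re = ‖z‖ ^ 2 := fun z => by
    simpa using inner_self_eq_norm_sq (𝕜 := ℂ) z
  rw [inner_split hJsa hJ2 x x, Complex.sub_re, h, h]

lemma uniformly_negative (M : Submodule ℂ H) (hMc : IsClosed (M : Set H))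
    (δ : ℝ) (hδ : 0 < δ) (hpos : ∀ x ∈ M, δ * ‖x‖ ^ 2 ≤ (⟪J x, x⟫_ℂ).re)
    (hmax : ∀ M' : Submodule ℂ H, M ≤ M' →
      (∃ δ' : ℝ, 0 < δ' ∧ ∀ x ∈ M', δ' * ‖x‖ ^ 2 ≤ (⟪J x, x⟫_ℂ).re) → M' = M) :
    ∀ y ∈ Jorth J M, (⟪J y, y⟫_ℂ).re ≤ -(min δ 1) * ‖y‖ ^ 2 := by
  set δ₀ := min δ 1 with hδ₀def
  have hδ₀ : 0 < δ₀ := lt_min hδ one_pos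
  have hδ₀le : δ₀ ≤ 1 := min_le_right _ _
  have hpos₀ : ∀ x ∈ M, δ₀ * ‖x‖ ^ 2 ≤ (⟪J x, x⟫_ℂ).re := fun x hx =>
    le_trans (by nlinarith [sq_nonneg ‖x‖, min_le_left δ 1]) (hpos x hx)
  set D : Submodule ℂ H := M.map (Ppos J : H →ₗ[ℂ] H) with hD
  have hDsub : ∀ x ∈ M, Ppos J x ∈ D := fun x hx => Submodule.mem_map_of_mem hx
  -- key norm inequality on M
  have hMlow : ∀ x ∈ M, δ₀ * ‖x‖ ^ 2 ≤ ‖Ppos J x‖ ^ 2 := by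
    intro x hx
    have h1 := hpos₀ x hx
    rw [re_inner_J_self hJsa hJ2] at h1
    nlinarith [sq_nonneg ‖x - Ppos J x‖]
  -- D is closed
  have hDclosed : IsClosed (D : Set H) := by
    have hrange : (D : Set H) = Set.range ((Ppos J) ∘L M.subtypeL) := by
      rw [hD, Submodule.map_coe, ContinuousLinearMap.coe_comp']
      rw [Set.range_comp, Submodule.coe_subtypeL', Submodule.coe_subtype, Subtype.range_coe]
      rfl
    rw [hrange]
    haveI : CompleteSpace M := hMc.completeSpace_coe
    have hanti : AntilipschitzWith ⟨(Real.sqrt δ₀)⁻¹, by positivity⟩ ((Ppos J) ∘L M.subtypeL) :=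
      ContinuousLinearMap.antilipschitz_of_bound _ fun x => by
        have h1 := hMlow (x : H) x.2
        have h2 : (Real.sqrt δ₀ * ‖(x : H)‖) ^ 2 ≤ ‖Ppos J (x : H)‖ ^ 2 := by
          rw [mul_pow, Real.sq_sqrt hδ₀.le]; exact h1
        have h3 : Real.sqrt δ₀ * ‖(x : H)‖ ≤ ‖Ppos J (x : H)‖ := by
          have h5 := Real.sqrt_le_sqrt h2
          rwa [Real.sqrt_sq (by positivity), Real.sqrt_sq (norm_nonneg _)] at h5
        have h4 : ‖(x : H)‖ ≤ (Real.sqrt δ₀)⁻¹ * ‖Ppos J (x : H)‖ := by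
          rw [le_inv_mul_iff₀ (Real.sqrt_pos.2 hδ₀)]; linarith
        exact h4
    exact hanti.isClosed_range ((Ppos J) ∘L M.subtypeL).uniformContinuous
  -- orthogonal complement of D meets the fixed space of Ppos trivially
  have hperp : ∀ u : H, Ppos J u = u → u ∈ Dᗮ → u = 0 := by
    intro u hu huD
    have hJu : J u = u := by
      conv_lhs => rw [← hu]
      rw [J_Ppos hJsa hJ2, hu]
    have hposM' : ∀ z ∈ M ⊔ (ℂ ∙ u), δ₀ / 2 * ‖z‖ ^ 2 ≤ (⟪J z, z⟫_ℂ).re := by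
      intro z hz
      obtain ⟨x, hx, w, hw, rfl⟩ := Submodule.mem_sup.1 hz
      obtain ⟨c, rfl⟩ := Submodule.mem_span_singleton.1 hw
      have hcross : ⟪J x, u⟫_ℂ = 0 := by
        rw [inner_split hJsa hJ2, hu]
        have h2 : u - u = (0 : H) := sub_self u
        rw [h2, inner_zero_right, sub_zero]
        exact (Submodule.mem_orthogonal D u).1 huD _ (hDsub x hx)
      have hxu : ⟪x, u⟫_ℂ = 0 := by
        have h9 : ⟪x, J u⟫_ℂ = 0 := by rw [← inner_J_comm hJsa]; exact hcross
        rwa [hJu] at h9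
      have expand : ⟪J (x + c • u), x + c • u⟫_ℂ
          = ⟪J x, x⟫_ℂ + ⟪c • u, c • u⟫_ℂ := by
        rw [map_add, inner_add_left, inner_add_right, inner_add_right]
        rw [map_smul, hJu]
        have e1 : ⟪J x, c • u⟫_ℂ = 0 := by
          rw [inner_smul_right, hcross, mul_zero]
        have e2 : ⟪c • u, x⟫_ℂ = 0 := by
          rw [inner_smul_left, ← inner_conj_symm, hxu]
          simp
        rw [e1, e2]
        ring
      rw [expand]
      have h3 := hpos₀ x hx
      have h4 : (⟪c • u, c • u⟫_ℂ).re = ‖c • u‖ ^ 2 := by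
        simpa using inner_self_eq_norm_sq (𝕜 := ℂ) (c • u)
      rw [Complex.add_re, h4]
      have h5 := norm_add_le x (c • u)
      have h6 : ‖x + c • u‖ ^ 2 ≤ (‖x‖ + ‖c • u‖) ^ 2 :=
        pow_le_pow_left₀ (norm_nonneg _) h5 2
      nlinarith [mul_le_mul_of_nonneg_left h6 hδ₀.le,
        mul_nonneg hδ₀.le (sq_nonneg (‖x‖ - ‖c • u‖)),
        mul_nonneg (sub_nonneg.2 hδ₀le) (sq_nonneg ‖c • u‖)]
    have hM' := hmax (M ⊔ (ℂ ∙ u)) le_sup_left ⟨δ₀ / 2, by positivity, hposM'⟩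
    have humem : u ∈ M := by
      rw [← hM']
      exact Submodule.mem_sup_right (Submodule.mem_span_singleton_self u)
    have h6 : ⟪Ppos J u, u⟫_ℂ = 0 :=
      (Submodule.mem_orthogonal D u).1 huD _ (hDsub u humem)
    rw [hu] at h6
    exact inner_self_eq_zero.1 h6
  -- surjectivity of Ppos restricted to M
  have hsurjPp : ∀ u : H, Ppos J u = u → ∃ x ∈ M, Ppos J x = u := by
    intro u hu
    haveI : CompleteSpace D := hDclosed.completeSpace_coe
    obtain ⟨x₀, hx₀, hx₀d⟩ := (Submodule.mem_map).1 (Submodule.orthogonalProjection D u).2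
    have he : u - Submodule.orthogonalProjection D u ∈ Dᗮ := Submodule.sub_starProjection_mem_orthogonal (K := D) u
    have hPd : Ppos J ((Submodule.orthogonalProjection D u : D) : H) = (Submodule.orthogonalProjection D u : D) := by
      rw [← hx₀d]
      exact Ppos_idem hJsa hJ2 x₀
    have hPe : Ppos J (u - Submodule.orthogonalProjection D u) = u - Submodule.orthogonalProjection D u := by
      rw [map_sub, hu, hPd]
    have h7 : u - (Submodule.orthogonalProjection D u : D) = 0 := hperp _ hPe he
    refine ⟨x₀, hx₀, ?_⟩
    rw [show Ppos J x₀ = _ from hx₀d]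
    rw [sub_eq_zero] at h7
    exact h7.symm
  -- main estimate
  intro y hy
  obtain ⟨x, hx, hxy⟩ := hsurjPp (Ppos J y) (Ppos_idem hJsa hJ2 y)
  set a := ‖Ppos J y‖ with ha
  set b := ‖y - Ppos J y‖ with hb
  set c := ‖x - Ppos J x‖ with hc
  have h1 : δ₀ * (a ^ 2 + c ^ 2) ≤ a ^ 2 - c ^ 2 := by
    have h10 := hpos₀ x hx
    rw [re_inner_J_self hJsa hJ2, norm_sq_split hJsa hJ2 x] at h10
    rw [← hc, hxy, ← ha] at h10
    linarith
  have h2 : a ^ 2 ≤ c * b := by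
    have h0 := hy x hx
    rw [inner_split hJsa hJ2, sub_eq_zero] at h0
    have h8 : (⟪Ppos J y, Ppos J y⟫_ℂ).re = a ^ 2 := by
      simpa using inner_self_eq_norm_sq (𝕜 := ℂ) (Ppos J y)
    calc a ^ 2 = (⟪Ppos J x, Ppos J y⟫_ℂ).re := by rw [hxy, h8]
      _ = (⟪x - Ppos J x, y - Ppos J y⟫_ℂ).re := by rw [h0]
      _ ≤ ‖x - Ppos J x‖ * ‖y - Ppos J y‖ := re_le_nn
      _ = c * b := by rw [← hc, ← hb]
  have key : (1 + δ₀) * a ^ 2 ≤ (1 - δ₀) * b ^ 2 := by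
    have ha0 : 0 ≤ a := ha ▸ norm_nonneg _
    rcases eq_or_lt_of_le ha0 with h0 | h0
    · nlinarith [sq_nonneg b]
    · have e2 : (1 + δ₀) * c ^ 2 ≤ (1 - δ₀) * a ^ 2 := by linarith
      have e3 : a ^ 2 * a ^ 2 ≤ (c * b) * (c * b) :=
        mul_self_le_mul_self (sq_nonneg a) h2
      have e4 : (1 + δ₀) * (a ^ 2 * a ^ 2) ≤ (1 + δ₀) * ((c * b) * (c * b)) :=
        mul_le_mul_of_nonneg_left e3 (by linarith)
      have e5 : b ^ 2 * ((1 + δ₀) * c ^ 2) ≤ b ^ 2 * ((1 - δ₀) * a ^ 2) :=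
        mul_le_mul_of_nonneg_left e2 (sq_nonneg b)
      nlinarith [mul_pos h0 h0, sq_nonneg b, sq_nonneg a]
  have hn : ‖y‖ ^ 2 = a ^ 2 + b ^ 2 := norm_sq_split hJsa hJ2 y
  rw [re_inner_J_self hJsa hJ2, hn]
  linarith

end KreinAux

lemma exists_projection (J : H →L[ℂ] H) (hJsa : IsSelfAdjoint J)
    (M : Submodule ℂ H) (hMc : IsClosed (M : Set H))
    (δ : ℝ) (hδ : 0 < δ) (hpos : ∀ x ∈ M, δ * ‖x‖ ^ 2 ≤ (⟪J x, x⟫_ℂ).re) :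
    ∃ P : H →L[ℂ] H, (∀ y : H, P y ∈ M) ∧ ∀ y : H, y - P y ∈ Jorth J M := by
  haveI : CompleteSpace M := hMc.completeSpace_coe
  set A : M →L[ℂ] M := (Submodule.orthogonalProjection M) ∘L (J ∘L M.subtypeL) with hA
  have hA_apply : ∀ x : M, A x = Submodule.orthogonalProjection M (J (x : H)) := fun x => rfl
  have hA_inner : ∀ x y : M, ⟪A x, y⟫_ℂ = ⟪J (x : H), (y : H)⟫_ℂ := fun x y => by
    rw [hA_apply]; exact Submodule.inner_orthogonalProjection_eq_of_mem_right (K := M) y (J (x : H))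
  have hre : ∀ x : M, δ * ‖x‖ ^ 2 ≤ (⟪A x, x⟫_ℂ).re := fun x => by
    rw [hA_inner x x]
    have := hpos (x : H) x.2
    rwa [show ‖(x : H)‖ = ‖x‖ from rfl] at this
  have hlow : ∀ x : M, δ * ‖x‖ ≤ ‖A x‖ := by
    intro x
    rcases eq_or_ne x 0 with h | h
    · simp [h]
    · have h1 := hre x
      have h2 : (⟪A x, x⟫_ℂ).re ≤ ‖A x‖ * ‖x‖ := re_le_nn
      have h3 : 0 < ‖x‖ := norm_pos_iff.2 h
      nlinarith
  have hinj : LinearMap.ker (A : M →ₗ[ℂ] M) = ⊥ := by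
    rw [LinearMap.ker_eq_bot']
    intro x hx
    have := hlow x
    rw [show A x = 0 from hx] at this
    simp only [norm_zero] at this
    have : ‖x‖ ≤ 0 := nonpos_of_mul_nonpos_right (by linarith) hδ
    simpa [norm_le_zero_iff] using this
  have hclosed : IsClosed (Set.range A) := by
    have hanti : AntilipschitzWith ⟨δ⁻¹, by positivity⟩ A :=
      A.antilipschitz_of_bound fun x => by
        have := hlow x
        have h4 : ‖x‖ ≤ δ⁻¹ * ‖A x‖ := by
          rw [le_inv_mul_iff₀ hδ]; linarith
        exact h4
    exact hanti.isClosed_range A.uniformContinuous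
  have hsurj : LinearMap.range (A : M →ₗ[ℂ] M) = ⊤ := by
    have hcr : IsClosed ((LinearMap.range (A : M →ₗ[ℂ] M) : Submodule ℂ M) : Set M) := by
      rw [LinearMap.coe_range]; exact hclosed
    haveI : CompleteSpace (LinearMap.range (A : M →ₗ[ℂ] M) : Submodule ℂ M) := hcr.completeSpace_coe
    rw [← Submodule.orthogonal_eq_bot_iff]
    rw [Submodule.eq_bot_iff]
    intro y hy
    have h0 := (Submodule.mem_orthogonal _ y).1 hy (A y) (LinearMap.mem_range_self _ y)
    have h1 := hre y
    rw [h0] at h1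
    simp only [Complex.zero_re] at h1
    have : ‖y‖ ^ 2 ≤ 0 := nonpos_of_mul_nonpos_right (by linarith) hδ
    have : ‖y‖ = 0 := by nlinarith [norm_nonneg y]
    simpa [norm_eq_zero] using this
  set Aeq := ContinuousLinearEquiv.ofBijective A hinj hsurj with hAeq
  have hAeq_fn : (Aeq : M → M) = A := by
    rw [hAeq]; exact ContinuousLinearEquiv.coeFn_ofBijective A hinj hsurj
  refine ⟨M.subtypeL ∘L ((Aeq.symm : M →L[ℂ] M) ∘L ((Submodule.orthogonalProjection M) ∘L J)), fun y => Submodule.coe_mem _, ?_⟩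
  intro y
  rw [mem_Jorth]
  intro x hx
  have hPy : (M.subtypeL ∘L ((Aeq.symm : M →L[ℂ] M) ∘L ((Submodule.orthogonalProjection M) ∘L J))) y
      = ((Aeq.symm (Submodule.orthogonalProjection M (J y)) : M) : H) := by
    simp [ContinuousLinearMap.comp_apply]
  have key : Submodule.orthogonalProjection M (J ((Aeq.symm (Submodule.orthogonalProjection M (J y)) : M) : H)) = Submodule.orthogonalProjection M (J y) := by
    have h5 : Aeq (Aeq.symm (Submodule.orthogonalProjection M (J y))) = Submodule.orthogonalProjection M (J y) := Aeq.apply_symm_apply _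
    rw [hAeq_fn, hA_apply] at h5
    exact h5
  rw [hPy, inner_J_comm hJsa, map_sub, inner_sub_right]
  have e1 : ⟪x, J y⟫_ℂ = ⟪(⟨x, hx⟩ : ↥M), Submodule.orthogonalProjection M (J y)⟫_ℂ := by
    exact (Submodule.inner_orthogonalProjection_eq_of_mem_left (K := M) ⟨x, hx⟩ (J y)).symm
  have e2 : ⟪x, J ((Aeq.symm (Submodule.orthogonalProjection M (J y)) : M) : H)⟫_ℂ
      = ⟪(⟨x, hx⟩ : ↥M), Submodule.orthogonalProjection M (J ((Aeq.symm (Submodule.orthogonalProjection M (J y)) : M) : H))⟫_ℂ := by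
    exact (Submodule.inner_orthogonalProjection_eq_of_mem_left (K := M) ⟨x, hx⟩ _).symm
  rw [e1, e2, key, sub_self]


theorem maximal_uniformly_positive_decomposition (J : H →L[ℂ] H)
    (hJsa : IsSelfAdjoint J) (hJ2 : ∀ x : H, J (J x) = x)
    (M : Submodule ℂ H) (hMc : IsClosed (M : Set H))
    (δ : ℝ) (hδ : 0 < δ) (hpos : ∀ x ∈ M, δ * ‖x‖ ^ 2 ≤ (⟪J x, x⟫_ℂ).re)
    (hmax : ∀ M' : Submodule ℂ H, M ≤ M' →
      (∃ δ' : ℝ, 0 < δ' ∧ ∀ x ∈ M', δ' * ‖x‖ ^ 2 ≤ (⟪J x, x⟫_ℂ).re) → M' = M) :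
    M ⊓ Jorth J M = ⊥ ∧ M ⊔ Jorth J M = ⊤ ∧
      (∃ δ' : ℝ, 0 < δ' ∧ ∀ x ∈ Jorth J M, (⟪J x, x⟫_ℂ).re ≤ -δ' * ‖x‖ ^ 2) ∧
      ∃ P : H →L[ℂ] H, (∀ x ∈ M, P x = x) ∧ (∀ x ∈ Jorth J M, P x = 0) ∧
        (∀ x : H, P x ∈ M) ∧ ∀ x y : H, ⟪J (P x), y⟫_ℂ = ⟪J x, P y⟫_ℂ := by
  obtain ⟨P, hPmem, hPN⟩ := exists_projection J hJsa M hMc δ hδ hpos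
  have hinf : M ⊓ Jorth J M = ⊥ := by
    rw [Submodule.eq_bot_iff]
    intro x hx
    obtain ⟨hxM, hxN⟩ := Submodule.mem_inf.1 hx
    have h0 := (mem_Jorth.1 hxN) x hxM
    have h1 := hpos x hxM
    rw [h0] at h1
    simp only [Complex.zero_re] at h1
    have h2 : ‖x‖ = 0 := by
      by_contra hne
      have h3 : 0 < ‖x‖ := (norm_nonneg x).lt_of_ne (Ne.symm hne)
      nlinarith [mul_pos hδ (pow_pos h3 2)]
    simpa using h2
  refine ⟨hinf, ?_, ?_, ?_⟩
  · rw [eq_top_iff]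
    intro y _
    rw [Submodule.mem_sup]
    exact ⟨P y, hPmem y, y - P y, hPN y, by abel⟩
  · exact ⟨min δ 1, lt_min hδ one_pos,
      uniformly_negative hJsa hJ2 M hMc δ hδ hpos hmax⟩
  · have hfix : ∀ x ∈ M, P x = x := by
      intro x hx
      have h3 : x - P x ∈ M ⊓ Jorth J M := Submodule.mem_inf.2 ⟨sub_mem hx (hPmem x), hPN x⟩
      rw [hinf, Submodule.mem_bot, sub_eq_zero] at h3
      exact h3.symm
    have hkill : ∀ x ∈ Jorth J M, P x = 0 := by
      intro x hx
      have h4 : x - (x - P x) ∈ Jorth J M := sub_mem hx (hPN x)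
      rw [sub_sub_cancel] at h4
      have h5 : P x ∈ M ⊓ Jorth J M := Submodule.mem_inf.2 ⟨hPmem x, h4⟩
      rwa [hinf, Submodule.mem_bot] at h5
    refine ⟨P, hfix, hkill, hPmem, ?_⟩
    intro x y
    have hy1 : ⟪J (P x), y - P y⟫_ℂ = 0 := (mem_Jorth.1 (hPN y)) (P x) (hPmem x)
    have hx1 : ⟪J (P y), x - P x⟫_ℂ = 0 := (mem_Jorth.1 (hPN x)) (P y) (hPmem y)
    rw [inner_sub_right, sub_eq_zero] at hy1
    have hx2 : ⟪J (x - P x), P y⟫_ℂ = 0 := by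
      rw [inner_J_conj hJsa, hx1, map_zero]
    rw [map_sub, inner_sub_left, sub_eq_zero] at hx2
    rw [hy1, hx2]
end

section
/- Let L be a maximal J-dissipative operator on a Krein space H with 0 ∈ ρ(L), and let M be a closed subspace invariant under L with 0 ∈ ρ(L|_M) such that L⁻¹M ⊆ M. Then the J-adjoint L^c leaves the J-orthogonal complement N = M^{[⊥]} invariant: (L^c)⁻¹ N ⊆ N, and D(L^c) ∩ N is dense in N provided M is uniformly positive and maximal. -/
open scoped InnerProductSpace

variable {H : Type*} [NormedAddCommGroup H] [InnerProductSpace ℂ H] [CompleteSpace H]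

theorem jadjoint_invariant_subspace (J : H →L[ℂ] H)
    (hJsa : IsSelfAdjoint J) (hJ2 : ∀ x : H, J (J x) = x)
    (L : H →ₗ.[ℂ] H) (hL : MaximalJDissipative J L)
    (R : H →L[ℂ] H) (hR : ResolventAt L 0 R)
    (M : Submodule ℂ H) (hMc : IsClosed (M : Set H))
    (hdenseM : Dense {x : M | (x : H) ∈ L.domain})
    (hinv : ∀ x : L.domain, (x : H) ∈ M → L x ∈ M)
    (hRinv : ∀ u ∈ M, R u ∈ M) :
    (∀ y ∈ Jorth J M, J ((ContinuousLinearMap.adjoint R) (J y)) ∈ Jorth J M) ∧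
      ((∃ δ : ℝ, 0 < δ ∧ ∀ x ∈ M, δ * ‖x‖ ^ 2 ≤ (⟪J x, x⟫_ℂ).re) →
        (∀ M' : Submodule ℂ H, M ≤ M' →
          (∃ δ' : ℝ, 0 < δ' ∧ ∀ x ∈ M', δ' * ‖x‖ ^ 2 ≤ (⟪J x, x⟫_ℂ).re) → M' = M) →
        Dense {y : (Jorth J M) | J (y : H) ∈ L.adjoint.domain}) := by
  -- basic facts about `J`
  have hJadj : ContinuousLinearMap.adjoint J = J := ContinuousLinearMap.isSelfAdjoint_iff'.mp hJsa
  have hJ : ∀ a b : H, ⟪J a, b⟫_ℂ = ⟪a, J b⟫_ℂ := by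
    intro a b
    conv_lhs => rw [← hJadj]
    rw [ContinuousLinearMap.adjoint_inner_left]
  -- basic facts about the resolvent
  have hRmem : ∀ y : H, R y ∈ L.domain := fun y => (hR.1 y).1
  have hLR : ∀ y : H, L ⟨R y, hRmem y⟩ = y := by
    intro y
    have := (hR.1 y).2
    simpa using this
  have hRL : ∀ x : L.domain, R (L x) = (x : H) := by
    intro x
    have := hR.2 x
    simpa using this
  -- Part 1
  have part1 : ∀ y ∈ Jorth J M, J ((ContinuousLinearMap.adjoint R) (J y)) ∈ Jorth J M := by
    intro y hy x hx
    have h1 : ⟪J x, J ((ContinuousLinearMap.adjoint R) (J y))⟫_ℂ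
        = ⟪x, (ContinuousLinearMap.adjoint R) (J y)⟫_ℂ := by
      rw [hJ, hJ2]
    rw [h1, ContinuousLinearMap.adjoint_inner_right, ← hJ]
    exact hy (R x) (hRinv x hx)
  refine ⟨part1, fun _ _ => ?_⟩
  -- N and its basic properties
  set N : Submodule ℂ H := Jorth J M with hN
  -- `N = (J M)ᗮ`
  have hNmem : ∀ y : H, y ∈ N ↔ y ∈ (M.map (J : H →ₗ[ℂ] H))ᗮ := by
    intro y
    constructor
    · intro hy
      rw [Submodule.mem_orthogonal]
      rintro u ⟨x, hx, rfl⟩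
      exact hy x hx
    · intro hy x hx
      exact (Submodule.mem_orthogonal _ _).mp hy (J x) ⟨x, hx, rfl⟩
  have hNeq : N = (M.map (J : H →ₗ[ℂ] H))ᗮ := by
    ext y; exact hNmem y
  -- `J M` is closed
  have hJMc : IsClosed ((M.map (J : H →ₗ[ℂ] H)) : Set H) := by
    have hset : ((M.map (J : H →ₗ[ℂ] H)) : Set H) = J ⁻¹' (M : Set H) := by
      ext u
      constructor
      · rintro ⟨x, hx, rfl⟩
        simpa [hJ2] using hx
      · intro hu
        exact ⟨J u, hu, hJ2 u⟩
    rw [hset]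
    exact hMc.preimage J.continuous
  have hNc : IsClosed (N : Set H) := by
    rw [hNeq]; exact Submodule.isClosed_orthogonal _
  haveI : CompleteSpace N := hNc.completeSpace_coe
  -- the set in question is a submodule of `N`
  set K : Submodule ℂ N :=
    Submodule.comap ((J : H →ₗ[ℂ] H).comp N.subtype) L.adjoint.domain with hK
  have hKset : {y : N | J (y : H) ∈ L.adjoint.domain} = (K : Set N) := by
    ext y
    simp [hK, Submodule.mem_comap]
  rw [hKset]
  rw [Submodule.dense_iff_topologicalClosure_eq_top, Submodule.topologicalClosure_eq_top_iff]
  rw [Submodule.eq_bot_iff]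
  intro w hw
  rw [Submodule.mem_orthogonal] at hw
  -- the key element `z`
  set z : H := J (R (J (w : H))) with hz
  have hzN : ∀ n : N, ⟪(n : H), z⟫_ℂ = 0 := by
    intro n
    -- `u = J R† J n` lies in `K`
    have huN : J ((ContinuousLinearMap.adjoint R) (J (n : H))) ∈ N :=
      part1 (n : H) n.2
    have huK : (⟨J ((ContinuousLinearMap.adjoint R) (J (n : H))), huN⟩ : N) ∈ K := by
      rw [hK, Submodule.mem_comap]
      have : (J : H →ₗ[ℂ] H).comp N.subtype
          ⟨J ((ContinuousLinearMap.adjoint R) (J (n : H))), huN⟩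
          = (ContinuousLinearMap.adjoint R) (J (n : H)) := by
        simp [hJ2]
      rw [this]
      apply LinearPMap.mem_adjoint_domain_of_exists
      refine ⟨J (n : H), fun x => ?_⟩
      rw [ContinuousLinearMap.adjoint_inner_left, hRL]
    have h0 := hw _ huK
    have h0' : ⟪J ((ContinuousLinearMap.adjoint R) (J (n : H))), (w : H)⟫_ℂ = 0 := h0
    calc ⟪(n : H), z⟫_ℂ = ⟪J (n : H), R (J (w : H))⟫_ℂ := by rw [hz, ← hJ]
      _ = ⟪(ContinuousLinearMap.adjoint R) (J (n : H)), J (w : H)⟫_ℂ := by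
          rw [ContinuousLinearMap.adjoint_inner_left]
      _ = ⟪J ((ContinuousLinearMap.adjoint R) (J (n : H))), (w : H)⟫_ℂ := by rw [hJ]
      _ = 0 := h0'
  -- hence `z ∈ Nᗮ = J M`
  have hzorth : z ∈ Nᗮ := by
    rw [Submodule.mem_orthogonal]
    intro u hu
    exact hzN ⟨u, hu⟩
  have hzJM : z ∈ M.map (J : H →ₗ[ℂ] H) := by
    rw [hNeq, Submodule.orthogonal_orthogonal_eq_closure] at hzorth
    exact Submodule.topologicalClosure_minimal _ le_rfl hJMc hzorth
  obtain ⟨x, hxM, hxz⟩ := hzJM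
  -- `R (J w) = x ∈ M`
  have hmM : R (J (w : H)) ∈ M := by
    have : x = R (J (w : H)) := by
      have := congrArg J hxz
      simpa [hz, hJ2] using this
    rwa [← this]
  -- `J w = L (R (J w)) ∈ M`
  have hJwM : J (w : H) ∈ M := by
    have := hinv ⟨R (J (w : H)), hRmem _⟩ hmM
    rwa [hLR] at this
  -- conclude `w = 0`
  have hw0 : ⟪(w : H), (w : H)⟫_ℂ = 0 := by
    have := (w : N).2
    have h := w.2 (J (w : H)) hJwM
    rwa [hJ2] at h
  have : (w : H) = 0 := inner_self_eq_zero.mp hw0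
  exact Subtype.ext this
end
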